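/- Let I be an almost reverse lexicographic ideal in R = k[x_1,...,x_n] whose last generator is M_ω = x^ω with ω = (ω_1,...,ω_μ), ω_μ > 0. For any α = (α_1,...,α_{μ-1}) ∈ Z_{≥0}^{μ-1} with α_1 < f_1, α_j < f_j(α_1,...,α_{j-1}) for 2 ≤ j ≤ μ-1, and α ≥ (ω_1,...,ω_{μ-1}) (in the induced reverse lex order on tuples), the quantity f_μ(α) = min{t : x^α x_μ^t ∈ I} satisfies 0 < f_μ(α) < ∞, and moreover x^α x_μ^{f_μ(α)} is a minimal generator of I. -/
import Mathlib


open scoped Classical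

/-- Degree of an exponent vector (monomial). -/
def mdeg {n : ℕ} (m : Fin n → ℕ) : ℕ := ∑ i, m i

/-- Degree reverse lexicographic order: `M > N`. -/
def RevLexGT {n : ℕ} (M N : Fin n → ℕ) : Prop :=
  mdeg N < mdeg M ∨
    (mdeg M = mdeg N ∧ ∃ s : Fin n, (∀ i : Fin n, s < i → M i = N i) ∧ M s < N s)

/-- A monomial ideal, identified with its set of monomials (exponent vectors),
is upward closed under divisibility. -/
def MonIdeal {n : ℕ} (I : Set (Fin n → ℕ)) : Prop :=
  ∀ m ∈ I, ∀ m' : Fin n → ℕ, (∀ i, m i ≤ m' i) → m' ∈ I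

/-- `m` is a minimal generator of the monomial ideal `I`. -/
def MinGen {n : ℕ} (I : Set (Fin n → ℕ)) (m : Fin n → ℕ) : Prop :=
  m ∈ I ∧ ∀ m' ∈ I, (∀ i, m' i ≤ m i) → m' = m

/-- Almost reverse lexicographic ideal. -/
def ARL {n : ℕ} (I : Set (Fin n → ℕ)) : Prop :=
  ∀ M N : Fin n → ℕ, MinGen I N → mdeg M = mdeg N → RevLexGT M N → M ∈ I

/-- Strongly stable monomial ideal. -/
def StronglyStable {n : ℕ} (I : Set (Fin n → ℕ)) : Prop :=
  MonIdeal I ∧ ∀ M ∈ I, ∀ i j : Fin n, j < i → 0 < M i →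
    (fun k => if k = i then M i - 1 else if k = j then M j + 1 else M k) ∈ I

/-- The last generator `M_ω` of a monomial ideal: a minimal generator of maximal
degree which is smallest in the degree reverse lexicographic order among the
minimal generators of that degree. -/
def IsLastGen {n : ℕ} (I : Set (Fin n → ℕ)) (W : Fin n → ℕ) : Prop :=
  MinGen I W ∧ (∀ N, MinGen I N → mdeg N ≤ mdeg W) ∧
    (∀ N, MinGen I N → mdeg N = mdeg W → N = W ∨ RevLexGT N W)

/-- `max M`: the largest (1-based) index of a variable dividing `M` (0 for `M = 1`). -/
def maxVar {n : ℕ} (m : Fin n → ℕ) : ℕ :=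
  Finset.univ.sup (fun i : Fin n => if 0 < m i then i.1 + 1 else 0)

/-- Hilbert function of `R/I`: the number of monomials of degree `d` not in `I`. -/
noncomputable def hilb {n : ℕ} (I : Set (Fin n → ℕ)) (d : ℕ) : ℕ :=
  Set.ncard {m : Fin n → ℕ | mdeg m = d ∧ m ∉ I}

/-- Truncation of an exponent vector to its first `i` coordinates. -/
def truncW {n : ℕ} (W : Fin n → ℕ) (i : ℕ) : Fin n → ℕ :=
  fun j => if j.1 < i then W j else 0

/-- The set `𝓘_i` (for `i ≤ μ-2`): exponent vectors supported on the first `i`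
coordinates, coordinatewise below the `f_j`'s, i.e. not lying in `I`. -/
def Iset {n : ℕ} (I : Set (Fin n → ℕ)) (i : ℕ) : Set (Fin n → ℕ) :=
  {α | (∀ k : Fin n, i ≤ k.1 → α k = 0) ∧ α ∉ I}

/-- The set `𝓘_{μ-1}`, which additionally requires `α ≥ (ω_1,…,ω_{μ-1})`. -/
def IsetLast {n : ℕ} (I : Set (Fin n → ℕ)) (W : Fin n → ℕ) (μ : ℕ) :
    Set (Fin n → ℕ) :=
  {α | α ∈ Iset I (μ - 1) ∧ (α = truncW W (μ - 1) ∨ RevLexGT α (truncW W (μ - 1)))}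

/-- `f_{i+1}(α) = min {t : x^α x_{i+1}^t ∈ I}` (ℕ-valued, junk `0` if no such `t`). -/
noncomputable def fmin {n : ℕ} (I : Set (Fin n → ℕ)) (α : Fin n → ℕ) (i : Fin n) : ℕ :=
  sInf {t | α + Pi.single i t ∈ I}

/-- `f_{i+1}(α)` valued in `ℕ∞` (equal to `⊤` when no power works). -/
noncomputable def fminTop {n : ℕ} (I : Set (Fin n → ℕ)) (α : Fin n → ℕ) (i : Fin n) : ℕ∞ :=
  sInf ((fun t : ℕ => (t : ℕ∞)) '' {t | α + Pi.single i t ∈ I})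

/-- Iterated truncated difference sequence `h^{(i)}`. -/
def hseq (h : ℕ → ℕ) : ℕ → ℕ → ℕ
  | 0, d => h d
  | _ + 1, 0 => 1
  | i + 1, e + 1 => hseq h i (e + 1) - hseq h i e

/-- The set whose infimum is `r_i(h)`. -/
def rset (h : ℕ → ℕ) (i : ℕ) : Set ℕ :=
  {d | 1 ≤ d ∧ hseq h i d ≤ hseq h i (d - 1)}

/-- `D(h) = min {i : r_i < ∞}`. -/
noncomputable def Dval (h : ℕ → ℕ) : ℕ := sInf {i | (rset h i).Nonempty}

/-- `h` is unimodal at each tail. -/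
def UnimodalAtTails (h : ℕ → ℕ) : Prop :=
  ∀ i, Dval h ≤ i → i < max 1 (h 1) →
    ∀ d, (∃ r ∈ rset h i, r ≤ d) → hseq h i d ≤ hseq h i (d - 1)

/-- The polynomial `Π (1 - z^{d_i})`. -/
noncomputable def froPoly (ds : List ℕ) : Polynomial ℤ :=
  (ds.map (fun d => 1 - Polynomial.X ^ d)).prod

/-- Coefficient of `z^i` in the power series `Π (1 - z^{d_i}) / (1-z)^n`. -/
noncomputable def froCoeff (n : ℕ) (ds : List ℕ) (i : ℕ) : ℤ :=
  ∑ j ∈ Finset.range (i + 1),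
    (froPoly ds).coeff j * (Nat.choose (n - 1 + (i - j)) (i - j) : ℤ)

/-- The Fröberg sequence `|n; d_1,…,d_m|`: the truncation `| · |` of the power
series `Π (1 - z^{d_i}) / (1-z)^n`. -/
noncomputable def fro (n : ℕ) (ds : List ℕ) (i : ℕ) : ℕ :=
  if ∀ j ≤ i, 0 < froCoeff n ds j then (froCoeff n ds i).toNat else 0

lemma mdeg_lt_of_le_of_ne {n : ℕ} {a b : Fin n → ℕ} (hle : ∀ i, a i ≤ b i)
    (hne : a ≠ b) : mdeg a < mdeg b := by
  have : ∃ i, a i < b i := by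
    by_contra hc; push_neg at hc
    exact hne (funext fun i => le_antisymm (hle i) (hc i))
  obtain ⟨i, hi⟩ := this
  exact Finset.sum_lt_sum (fun j _ => hle j) ⟨i, Finset.mem_univ i, hi⟩

lemma exists_minGen_le {n : ℕ} {I : Set (Fin n → ℕ)} :
    ∀ d (m : Fin n → ℕ), mdeg m = d → m ∈ I →
      ∃ N, MinGen I N ∧ ∀ i, N i ≤ m i := by
  intro d
  induction d using Nat.strong_induction_on with
  | _ d ih =>
    intro m hd hm
    by_cases h : ∀ m' ∈ I, (∀ i, m' i ≤ m i) → m' = m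
    · exact ⟨m, ⟨hm, h⟩, fun i => le_rfl⟩
    · push_neg at h
      obtain ⟨m', hm', hle, hne⟩ := h
      have hlt : mdeg m' < d := hd ▸ mdeg_lt_of_le_of_ne hle hne
      obtain ⟨N, hN, hNle⟩ := ih _ hlt m' rfl hm'
      exact ⟨N, hN, fun i => (hNle i).trans (hle i)⟩

lemma mdeg_swap {n : ℕ} (M : Fin n → ℕ) {i j : Fin n} (hij : j ≠ i) (h : 0 < M i) :
    mdeg (fun k => if k = i then M i - 1 else if k = j then M j + 1 else M k) = mdeg M := by
  have key : ∀ k, (if k = i then M i - 1 else if k = j then M j + 1 else M k)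
      + (if k = i then 1 else 0) = M k + (if k = j then 1 else 0) := by
    intro k
    by_cases hki : k = i
    · simp [hki, Ne.symm hij]; omega
    · by_cases hkj : k = j
      · simp [hki, hkj, hij]
      · simp [hki, hkj]
  have h1 : mdeg (fun k => if k = i then M i - 1 else if k = j then M j + 1 else M k) + 1
      = mdeg M + 1 := by
    calc mdeg (fun k => if k = i then M i - 1 else if k = j then M j + 1 else M k) + 1
        = ∑ k, ((if k = i then M i - 1 else if k = j then M j + 1 else M k)
            + (if k = i then 1 else 0)) := by
          simp [mdeg, Finset.sum_add_distrib]
      _ = ∑ k, (M k + (if k = j then 1 else 0)) :=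
          Finset.sum_congr rfl (fun k _ => key k)
      _ = mdeg M + 1 := by
          simp [mdeg, Finset.sum_add_distrib]
  omega

lemma stable_move {n : ℕ} {I : Set (Fin n → ℕ)} (hI : MonIdeal I) (hARL : ARL I)
    {M : Fin n → ℕ} (hM : M ∈ I) {i j : Fin n} (hji : j < i) (hMi : 0 < M i) :
    (fun k => if k = i then M i - 1 else if k = j then M j + 1 else M k) ∈ I := by
  have hij : j ≠ i := ne_of_lt hji
  obtain ⟨N, hN, hNle⟩ := exists_minGen_le (mdeg M) M rfl hM
  by_cases hNi : N i = M i
  · have hNi0 : 0 < N i := hNi ▸ hMi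
    have hdeg : mdeg (fun k => if k = i then N i - 1 else if k = j then N j + 1 else N k)
        = mdeg N := mdeg_swap N hij hNi0
    have hrl : RevLexGT (fun k => if k = i then N i - 1 else if k = j then N j + 1 else N k)
        N := by
      right
      refine ⟨hdeg, i, ?_, ?_⟩
      · intro k hk
        have h1 : k ≠ i := ne_of_gt hk
        have h2 : k ≠ j := ne_of_gt (hji.trans hk)
        simp [h1, h2]
      · show (if i = i then N i - 1 else if i = j then N j + 1 else N i) < N i
        rw [if_pos rfl]; omega
    apply hI _ (hARL _ N hN hdeg hrl)
    intro k
    have hk1 := hNle k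
    have hk2 := hNle i
    have hk3 := hNle j
    by_cases hki : k = i
    · simp [hki, hij]; omega
    · by_cases hkj : k = j
      · simp [hki, hkj, hij]; omega
      · simp [hki, hkj]; omega
  · apply hI N hN.1
    intro k
    have hk1 := hNle k
    have hk2 := hNle i
    have hk3 := hNle j
    by_cases hki : k = i
    · simp [hki]
      omega
    · by_cases hkj : k = j
      · simp [hki, hkj, hij]; omega
      · simp [hki, hkj]; omega

lemma exists_le_mdeg {n : ℕ} :
    ∀ d (m : Fin n → ℕ), mdeg m = d → ∀ e ≤ d,
      ∃ β : Fin n → ℕ, (∀ i, β i ≤ m i) ∧ mdeg β = e := by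
  intro d
  induction d using Nat.strong_induction_on with
  | _ d ih =>
    intro m hd e he
    rcases eq_or_lt_of_le he with heq | hlt
    · exact ⟨m, fun i => le_rfl, hd.trans heq.symm⟩
    · have hpos : 0 < mdeg m := by omega
      have : ∃ i, 0 < m i := by
        by_contra hc; push_neg at hc
        have : mdeg m = 0 := Finset.sum_eq_zero (fun i _ => Nat.le_zero.mp (hc i))
        omega
      obtain ⟨i, hi⟩ := this
      have key : ∀ k, (if k = i then m i - 1 else m k) + (if k = i then 1 else 0)
          = m k := by
        intro k
        by_cases hk : k = i <;> simp [hk] <;> omega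
      have hdm' : mdeg (fun k => if k = i then m i - 1 else m k) + 1 = mdeg m := by
        calc mdeg (fun k => if k = i then m i - 1 else m k) + 1
            = ∑ k, ((if k = i then m i - 1 else m k) + (if k = i then 1 else 0)) := by
              simp [mdeg, Finset.sum_add_distrib]
          _ = ∑ k, m k := Finset.sum_congr rfl (fun k _ => key k)
          _ = mdeg m := rfl
      have hle' : ∀ k, (if k = i then m i - 1 else m k) ≤ m k := by
        intro k; by_cases hk : k = i <;> simp [hk]
      have hdlt : mdeg (fun k => if k = i then m i - 1 else m k) < d := by omega
      have he' : e ≤ mdeg (fun k => if k = i then m i - 1 else m k) := by omega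
      obtain ⟨β, hβ, hβd⟩ := ih _ hdlt _ rfl e he'
      exact ⟨β, fun k => (hβ k).trans (hle' k), hβd⟩

lemma mdeg_add {n : ℕ} (a b : Fin n → ℕ) : mdeg (a + b) = mdeg a + mdeg b := by
  simp [mdeg, Finset.sum_add_distrib]

lemma mdeg_single {n : ℕ} (i : Fin n) (x : ℕ) : mdeg (Pi.single i x) = x := by
  classical
  simp [mdeg, Finset.sum_pi_single']

/-- For an ARL ideal with last generator `x^ω` (`max = μ`) and any
`α ∈ 𝓘_{μ-1}`, one has `0 < f_μ(α) < ∞` and `x^α x_μ^{f_μ(α)}` is a minimal generator. -/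
theorem arl_last_level_minimal_generators {n μ : ℕ} (I : Set (Fin n → ℕ))
    (hI : MonIdeal I) (hARL : ARL I)
    (W : Fin n → ℕ) (hW : IsLastGen I W) (hmax : maxVar W = μ)
    (hμ : 1 ≤ μ) (hμn : μ ≤ n)
    (α : Fin n → ℕ) (hα : α ∈ Iset I (μ - 1))
    (hge : α = truncW W (μ - 1) ∨ RevLexGT α (truncW W (μ - 1))) :
    0 < fmin I α ⟨μ - 1, by omega⟩ ∧
    {t | α + Pi.single (⟨μ - 1, by omega⟩ : Fin n) t ∈ I}.Nonempty ∧
    MinGen I (α + Pi.single (⟨μ - 1, by omega⟩ : Fin n) (fmin I α ⟨μ - 1, by omega⟩)) := by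
  have hn : 0 < n := by omega
  set p : Fin n := ⟨μ - 1, by omega⟩ with hpdef
  have hpv : p.1 = μ - 1 := rfl
  obtain ⟨hαsupp, hαI⟩ := hα
  have hWmem : W ∈ I := hW.1.1
  -- W vanishes at coordinates ≥ μ
  have hW0 : ∀ k : Fin n, μ ≤ k.1 → W k = 0 := by
    intro k hk
    by_contra h
    have h1 : 0 < W k := Nat.pos_of_ne_zero h
    have h2 := Finset.le_sup (f := fun i : Fin n => if 0 < W i then i.1 + 1 else 0)
      (Finset.mem_univ k)
    have h3 : (if 0 < W k then k.1 + 1 else 0) ≤ μ := by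
      rw [← hmax]; exact h2
    rw [if_pos h1] at h3; omega
  -- W p > 0
  have hWp : 0 < W p := by
    obtain ⟨i, _, hi⟩ := Finset.exists_mem_eq_sup (Finset.univ : Finset (Fin n))
      ⟨p, Finset.mem_univ p⟩ (fun i : Fin n => if 0 < W i then i.1 + 1 else 0)
    rw [show Finset.univ.sup (fun i : Fin n => if 0 < W i then i.1 + 1 else 0) = maxVar W
      from rfl, hmax] at hi
    by_cases hWi : 0 < W i
    · rw [if_pos hWi] at hi
      have : i = p := Fin.ext (by omega)
      rwa [this] at hWi
    · rw [if_neg hWi] at hi; omega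
  -- truncation identity
  have hE : truncW W (μ - 1) + Pi.single p (W p) = W := by
    funext k
    simp only [truncW, Pi.add_apply, Pi.single_apply]
    rcases lt_trichotomy k.1 (μ - 1) with h | h | h
    · have hkp : k ≠ p := by intro e; rw [e] at h; omega
      rw [if_pos h, if_neg hkp, add_zero]
    · have hkp : k = p := Fin.ext (by omega)
      rw [if_neg (by omega), if_pos hkp, zero_add, hkp]
    · have hkp : k ≠ p := by intro e; rw [e] at h; omega
      rw [if_neg (by omega), if_neg hkp, zero_add, (hW0 k (by omega)).symm]
  set d := mdeg W with hddef
  have hc : mdeg (truncW W (μ - 1)) + W p = d := by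
    have h1 := congrArg mdeg hE
    rw [mdeg_add, mdeg_single] at h1
    rw [hddef]; exact h1
  -- every monomial of degree d supported on the first μ-1 coordinates is in I
  have full_in : ∀ m : Fin n → ℕ, (∀ k : Fin n, μ - 1 ≤ k.1 → m k = 0) →
      mdeg m = d → m ∈ I := by
    intro m hsupp hdeg
    apply hARL m W hW.1 hdeg
    right
    refine ⟨hdeg, p, ?_, ?_⟩
    · intro i hpi
      rw [Fin.lt_def, hpv] at hpi
      rw [hsupp i (by omega), hW0 i (by omega)]
    · rw [hsupp p (by omega)]
      exact hWp
  -- mdeg α < d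
  have hαd : mdeg α < d := by
    by_contra h
    push_neg at h
    obtain ⟨β, hβle, hβd⟩ := exists_le_mdeg (mdeg α) α rfl d h
    have hβsupp : ∀ k : Fin n, μ - 1 ≤ k.1 → β k = 0 := by
      intro k hk
      have := hβle k
      have := hαsupp k hk
      omega
    exact hαI (hI β (full_in β hβsupp hβd) α hβle)
  -- mdeg (truncW) ≤ mdeg α
  have hαc : mdeg (truncW W (μ - 1)) ≤ mdeg α := by
    rcases hge with h | h
    · rw [h]
    · rcases h with h | ⟨h, _⟩
      · exact le_of_lt h
      · exact le_of_eq h.symm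
  set t := d - mdeg α with htdef
  have ht1 : 1 ≤ t := by omega
  have htWp : t ≤ W p := by omega
  have hαp0 : α p = 0 := hαsupp p (by omega)
  -- membership: α + t e_p ∈ I
  have hMem : α + Pi.single p t ∈ I := by
    rcases hge with h | h
    · have hmα : mdeg α = mdeg (truncW W (μ - 1)) := by rw [h]
      have htW : t = W p := by omega
      rw [h, htW, hE]; exact hWmem
    · have hdeg : mdeg (α + Pi.single p t) = d := by
        rw [mdeg_add, mdeg_single]; omega
      apply hARL _ W hW.1 hdeg
      right
      refine ⟨hdeg, ?_⟩
      rcases h with hlt | ⟨heq, s, hs1, hs2⟩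
      · refine ⟨p, ?_, ?_⟩
        · intro i hi
          rw [Fin.lt_def, hpv] at hi
          have hip : i ≠ p := by intro e; rw [e] at hi; omega
          simp only [Pi.add_apply, hαsupp i (show μ - 1 ≤ i.1 by omega),
            Pi.single_eq_of_ne hip, hW0 i (show μ ≤ i.1 by omega), add_zero]
        · have htlt : t < W p := by omega
          simpa [hαp0] using htlt
      · have hsp : s.1 < μ - 1 := by
          by_contra hc2
          push_neg at hc2
          have : truncW W (μ - 1) s = 0 := by
            simp [truncW, not_lt.mpr hc2]
          omega
        have htW : t = W p := by omega
        refine ⟨s, ?_, ?_⟩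
        · intro i hi
          rcases lt_trichotomy i.1 (μ - 1) with h1 | h1 | h1
          · have hip : i ≠ p := by intro e; rw [e] at h1; omega
            have := hs1 i hi
            rw [Pi.add_apply, Pi.single_eq_of_ne hip, add_zero, this]
            simp [truncW, h1]
          · have hip : i = p := Fin.ext (by omega)
            rw [hip, Pi.add_apply, Pi.single_eq_same, hαp0, zero_add, htW]
          · have hip : i ≠ p := by intro e; rw [e] at h1; omega
            simp only [Pi.add_apply, hαsupp i (show μ - 1 ≤ i.1 by omega),
              Pi.single_eq_of_ne hip, hW0 i (show μ ≤ i.1 by omega), add_zero]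
        · have hsp' : s ≠ p := by intro e; rw [e] at hsp; omega
          rw [Pi.add_apply, Pi.single_eq_of_ne hsp', add_zero]
          have : truncW W (μ - 1) s = W s := by simp [truncW, hsp]
          omega
  have hne : {t : ℕ | α + Pi.single p t ∈ I}.Nonempty := ⟨t, hMem⟩
  have h0 : (0 : ℕ) ∉ {t : ℕ | α + Pi.single p t ∈ I} := by
    intro hcon
    apply hαI
    have hcon2 : α + Pi.single p (0 : ℕ) ∈ I := hcon
    have h1 : α + Pi.single p (0 : ℕ) = α := by
      rw [Pi.single_zero, add_zero]
    rwa [h1] at hcon2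
  set F := fmin I α p with hFdef
  have hFmem : F ∈ {t : ℕ | α + Pi.single p t ∈ I} := Nat.sInf_mem hne
  have hFpos : 0 < F := by
    rcases Nat.eq_zero_or_pos F with h | h
    · exact absurd (h ▸ hFmem) h0
    · exact h
  have hFsub : α + Pi.single p (F - 1) ∉ I := by
    intro hcon
    have hcon' : F - 1 ∈ {t : ℕ | α + Pi.single p t ∈ I} := hcon
    have h2 : F ≤ F - 1 := Nat.sInf_le hcon'
    omega
  refine ⟨hFpos, hne, hFmem, ?_⟩
  intro m' hm' hle
  by_contra hne'
  have hstrict : ∃ i : Fin n, m' i < α i + (Pi.single p F : Fin n → ℕ) i := by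
    by_contra hc2; push_neg at hc2
    exact hne' (funext fun i => le_antisymm (hle i) (hc2 i))
  have hm'p : m' p ≤ F := by
    have h1 := hle p
    rwa [Pi.add_apply, hαp0, Pi.single_eq_same, zero_add] at h1
  by_cases hcase : m' p < F
  · apply hFsub
    apply hI m' hm'
    intro k
    by_cases hk : k = p
    · rw [hk]
      simp only [Pi.add_apply, hαp0, Pi.single_eq_same, zero_add]
      omega
    · have h5 := hle k
      rw [Pi.add_apply, Pi.single_eq_of_ne hk, add_zero] at h5
      simp only [Pi.add_apply, Pi.single_eq_of_ne hk, add_zero]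
      exact h5
  · have hp'' : m' p = F := le_antisymm hm'p (not_lt.mp hcase)
    obtain ⟨i, hi⟩ := hstrict
    have hip : i ≠ p := by
      intro e
      rw [e, hαp0, Pi.single_eq_same, zero_add, hp''] at hi
      omega
    rw [Pi.single_eq_of_ne hip, add_zero] at hi
    have hiμ : i.1 < μ - 1 := by
      by_contra hc2
      push_neg at hc2
      rw [hαsupp i hc2] at hi
      omega
    have hilt : i < p := by rw [Fin.lt_def, hpv]; omega
    have hm'ppos : 0 < m' p := by omega
    have hswap := stable_move hI hARL hm' hilt hm'ppos
    apply hFsub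
    apply hI _ hswap
    intro k
    by_cases hk : k = p
    · rw [hk]
      have hpi : p ≠ i := Ne.symm hip
      simp only [eq_self_iff_true, if_true, Pi.add_apply, hαp0, Pi.single_eq_same, zero_add]
      omega
    · by_cases hk2 : k = i
      · rw [hk2]
        have h6 : i ≠ p := hip
        simp only [if_neg h6, eq_self_iff_true, if_true, Pi.add_apply, Pi.single_eq_of_ne h6, add_zero]
        omega
      · simp only [if_neg hk, if_neg hk2, Pi.add_apply, Pi.single_eq_of_ne hk, add_zero]
        have h5 := hle k
        rwa [Pi.add_apply, Pi.single_eq_of_ne hk, add_zero] at h5
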